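/- arXiv:0804.2596 — 4 statements merged into one kernel-verified Lean document; each statement's English description precedes it below -/
import Mathlib

section
/- Let K be a field of characteristic zero, let w ∈ ℕ^n be non-negative integer weights with Σ_{i=1}^n w_i ≥ 1, and let I ⊆ K[x₁,…,x_n] be an ideal generated by polynomials g₁,…,g_p each of which is quasihomogeneous for the weights w, i.e. Σ_{i=1}^n w_i·x_i·∂g_j/∂x_i = δ_j·g_j for some δ_j ∈ ℤ. Then for every polynomial F ∈ K[x₁,…,x_n] there exists a polynomial vector field X = (X₁,…,X_n) ∈ K[x₁,…,x_n]^n such that Σ_{i=1}^n X_i·∂h/∂x_i ∈ I for every h ∈ I (i.e. X ∈ Derlog(I)) and Σ_{i=1}^n ∂X_i/∂x_i = F. In other words, the divergence map div : Derlog(I) → K[x₁,…,x_n] is surjective. -/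
open MvPolynomial Finset

private lemma wqh_X_mul_pderiv_monomial {K : Type*} [CommRing K] {n : ℕ} (i : Fin n)
    (s : Fin n →₀ ℕ) (a : K) :
    X i * pderiv i (monomial s a) = C ((s i : K)) * monomial s a := by
  rw [pderiv_monomial, X, monomial_mul, C_mul_monomial]
  by_cases h : s i = 0
  · simp [h]
  · have hle : Finsupp.single i 1 ≤ s := Finsupp.single_le_iff.mpr (Nat.one_le_iff_ne_zero.mpr h)
    rw [add_tsub_cancel_of_le hle]
    congr 1
    ring

private lemma wqh_smul_eq_C_mul {K : Type*} [CommRing K] {n : ℕ} (m : ℕ)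
    (q : MvPolynomial (Fin n) K) : (m : ℤ) • q = C ((m : K)) * q := by
  rw [natCast_zsmul, nsmul_eq_mul, ← C_eq_coe_nat]

private lemma wqh_euler_monomial {K : Type*} [CommRing K] {n : ℕ} (w : Fin n → ℕ)
    (s : Fin n →₀ ℕ) (a : K) :
    ∑ i, C ((w i : K)) * (X i * pderiv i (monomial s a))
      = C (((∑ i, w i * s i : ℕ) : K)) * monomial s a := by
  have : ∀ i ∈ Finset.univ (α := Fin n),
      C ((w i : K)) * (X i * pderiv i (monomial s a))
        = C (((w i * s i : ℕ) : K)) * monomial s a := by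
    intro i _
    rw [wqh_X_mul_pderiv_monomial, ← mul_assoc, ← C_mul, Nat.cast_mul]
  rw [Finset.sum_congr rfl this, ← Finset.sum_mul, ← map_sum, ← Nat.cast_sum]

open MvPolynomial Finset in
/-- Infinitesimal content of Theorem 4.3 (I-orb-wqh), polynomial setting: if the ideal `I` is
generated by polynomials `g₁,…,g_p` that are quasihomogeneous for a common system of
non-negative weights with positive total weight, then the divergence map
`div : Derlog(I) → K[x₁,…,x_n]` is surjective. -/
theorem wqh_ideal_divergence_surjective
    (K : Type*) [Field K] [CharZero K] (n p : ℕ)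
    (w : Fin n → ℕ) (hw : 1 ≤ ∑ i, w i)
    (g : Fin p → MvPolynomial (Fin n) K) (δ : Fin p → ℤ)
    (hqh : ∀ j, ∑ i, (w i : ℤ) • (X i * pderiv i (g j)) = δ j • g j)
    (I : Ideal (MvPolynomial (Fin n) K)) (hI : I = Ideal.span (Set.range g)) :
    ∀ F : MvPolynomial (Fin n) K,
      ∃ Xf : Fin n → MvPolynomial (Fin n) K,
        (∀ h ∈ I, (∑ i, Xf i * pderiv i h) ∈ I) ∧
        ∑ i, pderiv i (Xf i) = F := by
  intro F
  -- the Euler-type operator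
  set D : MvPolynomial (Fin n) K → MvPolynomial (Fin n) K :=
    fun h => ∑ i, C ((w i : K)) * (X i * pderiv i h) with hD
  have hDdef : ∀ h, D h = ∑ i, C ((w i : K)) * (X i * pderiv i h) := fun _ => rfl
  -- rewrite the quasihomogeneity hypothesis
  have hqh' : ∀ j, D (g j) = C ((δ j : K)) * g j := by
    intro j
    have h1 := hqh j
    simp only [wqh_smul_eq_C_mul] at h1
    rw [hDdef, h1, zsmul_eq_mul, ← map_intCast (C : K →+* MvPolynomial (Fin n) K) (δ j)]
  -- D is additive and satisfies Leibniz
  have hDadd : ∀ a b, D (a + b) = D a + D b := by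
    intro a b
    simp [hDdef, map_add, mul_add, Finset.sum_add_distrib]
  have hDmul : ∀ a b, D (a * b) = a * D b + b * D a := by
    intro a b
    simp only [hDdef, pderiv_mul, Finset.mul_sum]
    rw [← Finset.sum_add_distrib]
    exact Finset.sum_congr rfl fun i _ => by ring
  -- D preserves the ideal
  have hDI : ∀ h ∈ I, D h ∈ I := by
    subst hI
    intro h hh
    induction hh using Submodule.span_induction with
    | mem x hx =>
      obtain ⟨j, rfl⟩ := hx
      rw [hqh' j]
      exact Ideal.mul_mem_left _ _ (Ideal.subset_span ⟨j, rfl⟩)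
    | zero => simp [hDdef]
    | add x y hx hy hx' hy' => rw [hDadd]; exact Ideal.add_mem _ hx' hy'
    | smul a x hx hx' =>
      rw [smul_eq_mul, hDmul]
      exact Ideal.add_mem _ (Ideal.mul_mem_left _ _ hx') (Ideal.mul_mem_right _ _ hx)
  -- weighted degree
  set W : ℕ := ∑ i, w i with hW
  set wd : (Fin n →₀ ℕ) → ℕ := fun s => ∑ i, w i * s i with hwd
  have hden : ∀ s : Fin n →₀ ℕ, ((W + wd s : ℕ) : K) ≠ 0 := by
    intro s
    have : 0 < W + wd s := lt_of_lt_of_le hw (Nat.le_add_right _ _)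
    exact_mod_cast Nat.cast_pos.mpr this |>.ne'
  -- the scaled potential
  set f : MvPolynomial (Fin n) K :=
    ∑ s ∈ F.support, monomial s ((coeff s F) / ((W + wd s : ℕ) : K)) with hf
  refine ⟨fun i => C ((w i : K)) * f * X i, ?_, ?_⟩
  · intro h hh
    have : ∑ i, C ((w i : K)) * f * X i * pderiv i h = f * D h := by
      rw [hDdef, Finset.mul_sum]
      exact Finset.sum_congr rfl fun i _ => by ring
    rw [this]
    exact Ideal.mul_mem_left _ _ (hDI h hh)
  · -- divergence computation
    have hstep : ∀ i, pderiv i (C ((w i : K)) * f * X i)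
        = C ((w i : K)) * (X i * pderiv i f) + C ((w i : K)) * f := by
      intro i
      rw [pderiv_mul, pderiv_mul, pderiv_C, pderiv_X_self, mul_one]
      ring
    calc ∑ i, pderiv i (C ((w i : K)) * f * X i)
        = D f + C ((W : K)) * f := by
          rw [Finset.sum_congr rfl fun i _ => hstep i, Finset.sum_add_distrib, hDdef]
          congr 1
          rw [← Finset.sum_mul, ← map_sum, hW, Nat.cast_sum]
      _ = F := by
          rw [hDdef, hf]
          simp only [map_sum, Finset.mul_sum, Finset.sum_comm (s := Finset.univ)]
          rw [← Finset.sum_add_distrib]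
          have : ∀ s ∈ F.support,
              (∑ i, C ((w i : K)) * (X i * pderiv i (monomial s (coeff s F / ((W + wd s : ℕ) : K)))))
                + C ((W : K)) * monomial s (coeff s F / ((W + wd s : ℕ) : K))
                = monomial s (coeff s F) := by
            intro s _
            rw [wqh_euler_monomial, ← add_mul, ← map_add, ← Nat.cast_add,
              Nat.add_comm _ W, C_mul_monomial]
            congr 1
            rw [mul_comm]
            exact div_mul_cancel₀ _ (hden s)
          rw [Finset.sum_congr rfl this]
          exact F.support_sum_monomial_coeff
end

section
/- Let K be a field of characteristic zero, let I ⊆ K[x₁,…,x_n] be an ideal, and let g₁,…,g_s ∈ I be polynomials such that each g_i is quasihomogeneous for some non-negative integer weights w^{(i)} ∈ ℕ^n with Σ_{j=1}^n w^{(i)}_j ≥ 1 and some degree δ_i ∈ ℕ, i.e. Σ_{j=1}^n w^{(i)}_j·x_j·∂g_i/∂x_j = δ_i·g_i. Let D = { Σ_{j=1}^n ∂X_j/∂x_j : X ∈ K[x₁,…,x_n]^n with Σ_j X_j·∂h/∂x_j ∈ I for all h ∈ I } be the K-subspace of divergences of vector fields in Derlog(I), and let J ⊆ K[x₁,…,x_n]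 be the ideal generated by all partial derivatives ∂g_i/∂x_j (1 ≤ i ≤ s, 1 ≤ j ≤ n). Then dim_K K[x₁,…,x_n]/D ≤ dim_K K[x₁,…,x_n]/J. -/
open MvPolynomial Finset in
/-- Corollary 4.8 (finite-cor), polynomial setting: if the ideal `I` contains elements
`g₁,…,g_s`, each quasihomogeneous for its own system of non-negative weights with positive
total weight, then the codimension of the space `D` of divergences of vector fields in
`Derlog(I)` is at most the codimension of the ideal `J` generated by all partial
derivatives `∂g_i/∂x_j`. -/
theorem wqh_generators_divergence_codim_bound
    (K : Type*) [Field K] [CharZero K] (n s : ℕ)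
    (I : Ideal (MvPolynomial (Fin n) K))
    (g : Fin s → MvPolynomial (Fin n) K) (hg : ∀ i, g i ∈ I)
    (w : Fin s → Fin n → ℕ) (hw : ∀ i, 1 ≤ ∑ j, w i j) (δ : Fin s → ℕ)
    (hqh : ∀ i, ∑ j, (w i j) • (X j * pderiv j (g i)) = (δ i) • g i)
    (D : Submodule K (MvPolynomial (Fin n) K))
    (hD : D = Submodule.span K
      {F : MvPolynomial (Fin n) K |
        ∃ Y : Fin n → MvPolynomial (Fin n) K,
          (∀ h ∈ I, (∑ j, Y j * pderiv j h) ∈ I) ∧ ∑ j, pderiv j (Y j) = F})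
    (J : Ideal (MvPolynomial (Fin n) K))
    (hJ : J = Ideal.span {F : MvPolynomial (Fin n) K | ∃ i j, F = pderiv j (g i)}) :
    Module.rank K (MvPolynomial (Fin n) K ⧸ D) ≤
      Module.rank K (MvPolynomial (Fin n) K ⧸ Submodule.restrictScalars K J) := by
  have hDset : ∀ F : MvPolynomial (Fin n) K, (∃ Y : Fin n → MvPolynomial (Fin n) K,
      (∀ h ∈ I, (∑ j, Y j * pderiv j h) ∈ I) ∧ ∑ j, pderiv j (Y j) = F) → F ∈ D := by
    intro F hF; rw [hD]; exact Submodule.subset_span hF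
  -- Step A : derivatives of multiples of elements of I lie in D
  have stepA : ∀ (p h : MvPolynomial (Fin n) K), h ∈ I → ∀ j : Fin n,
      pderiv j (p * h) ∈ D := by
    intro p h hh j
    apply hDset
    refine ⟨fun k => if k = j then p * h else 0, ?_, ?_⟩
    · intro f hf
      have : (∑ k, (if k = j then p * h else 0) * pderiv k f) = (p * h) * pderiv j f := by
        simp [ite_mul]
      rw [this]
      exact Ideal.mul_mem_right _ _ (Ideal.mul_mem_left _ _ hh)
    · have hk : ∀ k : Fin n, pderiv k (if k = j then p * h else 0)
          = if k = j then pderiv j (p * h) else 0 := by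
        intro k; by_cases hk : k = j <;> simp [hk]
      simp [hk]
  -- key monomial lemma
  have lem1 : ∀ (j : Fin n) (t : Fin n →₀ ℕ),
      X j * pderiv j (monomial t (1 : K)) = ((t j : K)) • monomial t (1 : K) := by
    intro j t
    rw [pderiv_monomial]
    rcases Nat.eq_zero_or_pos (t j) with h0 | h0
    · simp [h0]
    · rw [X, monomial_mul, smul_monomial]
      congr 1
      · rw [add_comm, tsub_add_cancel_of_le (Finsupp.single_le_iff.mpr h0)]
      · simp
  have hqh' : ∀ i, ∑ j, ((w i j : K)) • (X j * pderiv j (g i)) = ((δ i : K)) • g i := by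
    intro i
    simpa [← Nat.cast_smul_eq_nsmul K] using hqh i
  -- Step B : multiples of each g i lie in D
  have stepB : ∀ (i : Fin s) (q : MvPolynomial (Fin n) K), q * g i ∈ D := by
    intro i q
    induction q using MvPolynomial.induction_on' with
    | add p q hp hq => rw [add_mul]; exact add_mem hp hq
    | monomial t a =>
      have ha : (monomial t a : MvPolynomial (Fin n) K) * g i
          = a • ((monomial t (1:K)) * g i) := by
        rw [← smul_mul_assoc, smul_monomial, smul_eq_mul, mul_one]
      rw [ha]
      refine D.smul_mem a ?_
      set m : MvPolynomial (Fin n) K := monomial t (1:K) with hm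
      set c : ℕ := (∑ j, (w i j + w i j * t j)) + δ i with hc
      have hc1 : 1 ≤ c := by
        calc 1 ≤ ∑ j, w i j := hw i
        _ ≤ ∑ j, (w i j + w i j * t j) := Finset.sum_le_sum fun j _ => Nat.le_add_right _ _
        _ ≤ c := Nat.le_add_right _ _
      have hc0 : ((c : K)) ≠ 0 := Nat.cast_ne_zero.mpr (by omega)
      set Y : Fin n → MvPolynomial (Fin n) K
        := fun j => ((w i j : K)) • (X j * (m * g i)) with hY
      have h1 : ∀ j, pderiv j (Y j) =
          (((w i j + w i j * t j : ℕ) : K)) • (m * g i)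
            + m * (((w i j : K)) • (X j * pderiv j (g i))) := by
        intro j
        show pderiv j (((w i j : K)) • (X j * (m * g i))) = _
        rw [show ((w i j : K)) • (X j * (m * g i)) = C ((w i j : K)) * (X j * (m * g i)) from
          (smul_eq_C_mul _ _)]
        rw [pderiv_C_mul, pderiv_mul, pderiv_X_self, pderiv_mul, hm, mul_add (X j),
          ← mul_assoc (X j), lem1]
        rw [smul_eq_C_mul, smul_eq_C_mul, smul_eq_C_mul, ← hm]
        push_cast
        simp only [map_add, map_mul]
        ring
      have hdiv : ∑ j, pderiv j (Y j) = ((c : K)) • (m * g i) := by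
        rw [Finset.sum_congr rfl fun j _ => h1 j, Finset.sum_add_distrib,
          ← Finset.mul_sum, hqh' i]
        rw [show (∑ j, (((w i j + w i j * t j : ℕ) : K)) • (m * g i))
            = (((∑ j, (w i j + w i j * t j) : ℕ) : K)) • (m * g i) from by
          rw [← Finset.sum_smul]; push_cast; ring_nf]
        rw [hc]
        rw [smul_eq_C_mul, smul_eq_C_mul, smul_eq_C_mul]
        push_cast
        rw [map_add]
        ring
      have hmem : (∑ j, pderiv j (Y j)) ∈ D := by
        apply hDset
        refine ⟨Y, ?_, rfl⟩
        intro f hf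
        refine Submodule.sum_mem _ fun j _ => ?_
        rw [hY]
        show (((w i j : K)) • (X j * (m * g i))) * pderiv j f ∈ I
        rw [smul_mul_assoc]
        refine Submodule.smul_of_tower_mem _ _ ?_
        exact Ideal.mul_mem_right _ _ (Ideal.mul_mem_left _ _ (Ideal.mul_mem_left _ _ (hg i)))
      have hfin : m * g i = ((c : K))⁻¹ • (∑ j, pderiv j (Y j)) := by
        rw [hdiv, inv_smul_smul₀ hc0]
      rw [hfin]
      exact D.smul_mem _ hmem
  -- Step C : p * ∂_j g_i ∈ D
  have stepC : ∀ (p : MvPolynomial (Fin n) K) (i : Fin s) (j : Fin n),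
      p * pderiv j (g i) ∈ D := by
    intro p i j
    have h : p * pderiv j (g i) = pderiv j (p * g i) - (pderiv j p) * g i := by
      rw [pderiv_mul]; ring
    rw [h]
    exact sub_mem (stepA p (g i) (hg i) j) (stepB i (pderiv j p))
  -- Step D : J ≤ D
  have hle : Submodule.restrictScalars K J ≤ D := by
    intro x hx
    have hx' : x ∈ J := hx
    rw [hJ] at hx'
    have key : ∀ p : MvPolynomial (Fin n) K, p * x ∈ D := by
      refine Submodule.span_induction ?_ ?_ ?_ ?_ hx'
      · rintro y ⟨i, j, rfl⟩ p; exact stepC p i j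
      · intro p; simp
      · intro a b _ _ ha hb p; rw [mul_add]; exact add_mem (ha p) (hb p)
      · intro r a _ hrec p; rw [smul_eq_mul, ← mul_assoc]; exact hrec (p * r)
    simpa using key 1

  -- conclude via the surjection (R ⧸ J) → (R ⧸ D)
  let f := Submodule.mapQ (Submodule.restrictScalars K J) D LinearMap.id hle
  have hsurj : Function.Surjective f := by
    intro y
    obtain ⟨x, rfl⟩ := Submodule.Quotient.mk_surjective D y
    exact ⟨Submodule.Quotient.mk x, by simp [f, Submodule.mapQ_apply]⟩
  exact LinearMap.rank_le_of_surjective f hsurj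
end

section
/- Let K be a field of characteristic zero. In the polynomial ring K[y₁,y₂], let D be the set of all polynomials of the form ∂/∂y₁( (y₂² − y₁³)·g₁ ) + ∂/∂y₂( (y₂² − y₁³)·g₂ ) with g₁, g₂ ∈ K[y₁,y₂]. Then D is a K-subspace of K[y₁,y₂] and K[y₁,y₂] = D ⊕ span_K{1, y₁}; in particular the quotient K[y₁,y₂]/D is 2-dimensional with basis the classes of 1 and of y₁. -/
/-- The linear map `(g₁, g₂) ↦ ∂/∂y₁((y₂² - y₁³)·g₁) + ∂/∂y₂((y₂² - y₁³)·g₂)` on pairs of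
polynomials in `K[y₁,y₂]`, whose range is the space of divergences of vector fields with
components in the ideal of the cuspidal curve. -/
noncomputable def cuspDivMap (K : Type*) [Field K] :
    (MvPolynomial (Fin 2) K × MvPolynomial (Fin 2) K) →ₗ[K] MvPolynomial (Fin 2) K :=
  ((MvPolynomial.pderiv (0 : Fin 2)).toLinearMap ∘ₗ
      LinearMap.mulLeft K ((MvPolynomial.X 1) ^ 2 - (MvPolynomial.X 0) ^ 3) ∘ₗ
      LinearMap.fst K _ _) +
  ((MvPolynomial.pderiv (1 : Fin 2)).toLinearMap ∘ₗ
      LinearMap.mulLeft K ((MvPolynomial.X 1) ^ 2 - (MvPolynomial.X 0) ^ 3) ∘ₗ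
      LinearMap.snd K _ _)

namespace CuspAux
open MvPolynomial

variable {K : Type*} [Field K]

lemma cuspDivMap_apply (g₁ g₂ : MvPolynomial (Fin 2) K) :
    cuspDivMap K (g₁, g₂) =
      pderiv (0 : Fin 2) ((X 1 ^ 2 - X 0 ^ 3) * g₁) +
      pderiv (1 : Fin 2) ((X 1 ^ 2 - X 0 ^ 3) * g₂) := rfl

lemma coeff_pderiv (i : Fin 2) (m : Fin 2 →₀ ℕ) (f : MvPolynomial (Fin 2) K) :
    coeff m (pderiv i f) = (m i + 1 : K) * coeff (m + Finsupp.single i 1) f := by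
  induction f using MvPolynomial.induction_on' with
  | monomial s a =>
      rw [pderiv_monomial, coeff_monomial, coeff_monomial]
      by_cases h : s = m + Finsupp.single i 1
      · rw [if_pos h, if_pos (by rw [h]; simp)]
        have hsi : s i = m i + 1 := by rw [h]; simp
        rw [hsi]; push_cast; ring
      · rw [if_neg h, mul_zero]
        by_cases h2 : s - Finsupp.single i 1 = m
        · rw [if_pos h2]
          by_cases h3 : s i = 0
          · simp [h3]
          · exact absurd (by rw [← h2, tsub_add_cancel_of_le (Finsupp.single_le_iff.mpr (by omega))]) h
        · rw [if_neg h2]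
  | add p q hp hq => simp [coeff_add, hp, hq, mul_add]


lemma coeff_P_mul (g : MvPolynomial (Fin 2) K) (m : Fin 2 →₀ ℕ)
    (h2 : m 1 < 2) (h3 : m 0 < 3) :
    coeff m ((X 1 ^ 2 - X 0 ^ 3 : MvPolynomial (Fin 2) K) * g) = 0 := by
  rw [sub_mul, coeff_sub, X_pow_eq_monomial, X_pow_eq_monomial,
    coeff_monomial_mul', coeff_monomial_mul',
    if_neg (by rw [Finsupp.single_le_iff]; omega),
    if_neg (by rw [Finsupp.single_le_iff]; omega), sub_zero]

lemma coeffs_of_mem {F : MvPolynomial (Fin 2) K}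
    (hF : F ∈ LinearMap.range (cuspDivMap K)) :
    coeff 0 F = 0 ∧ coeff (Finsupp.single 0 1) F = 0 := by
  obtain ⟨⟨g₁, g₂⟩, rfl⟩ := hF
  rw [cuspDivMap_apply]
  constructor <;>
  · rw [coeff_add, coeff_pderiv, coeff_pderiv,
      coeff_P_mul _ _ (by simp) (by simp),
      coeff_P_mul _ _ (by simp) (by simp)]
    ring


lemma smul_eq_Cmul (c : K) (p : MvPolynomial (Fin 2) K) : c • p = C c * p := by
  rw [smul_eq_C_mul]

lemma pderiv_natCast (i : Fin 2) (n : ℕ) :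
    pderiv i ((n : MvPolynomial (Fin 2) K)) = 0 := by
  rw [← map_natCast (C : K →+* MvPolynomial (Fin 2) K) n, pderiv_C]

lemma div_b1 (a : ℕ) :
    cuspDivMap K (0, X 0 ^ a) = (2 : K) • (X 0 ^ a * X 1) := by
  rw [cuspDivMap_apply, smul_eq_Cmul]
  simp only [mul_zero, map_zero, zero_add, pderiv_mul, pderiv_pow, map_sub,
    pderiv_X_self, pderiv_X_of_ne (by decide : (0:Fin 2) ≠ 1),
    pderiv_X_of_ne (by decide : (1:Fin 2) ≠ 0)]
  simp only [map_natCast, map_ofNat, map_one, map_add, pderiv_C, C_1, pderiv_natCast, pderiv_one]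
  push_cast
  ring

lemma div_bsucc (a b : ℕ) :
    cuspDivMap K (0, X 0 ^ a * X 1 ^ (b + 1)) =
      ((b : K) + 3) • (X 0 ^ a * X 1 ^ (b + 2)) -
      ((b : K) + 1) • (X 0 ^ (a + 3) * X 1 ^ b) := by
  rw [cuspDivMap_apply, smul_eq_Cmul, smul_eq_Cmul]
  simp only [mul_zero, map_zero, zero_add, pderiv_mul, pderiv_pow, map_sub,
    pderiv_X_self, pderiv_X_of_ne (by decide : (0:Fin 2) ≠ 1),
    pderiv_X_of_ne (by decide : (1:Fin 2) ≠ 0), map_add, C_add]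
  simp only [map_natCast, map_ofNat, map_one, map_add, pderiv_C, C_1, pderiv_natCast, pderiv_one]
  push_cast
  ring

lemma div_pow0 : cuspDivMap K (1, 0) = -((3 : K) • X 0 ^ 2) := by
  rw [cuspDivMap_apply, smul_eq_Cmul]
  simp only [mul_one, mul_zero, map_zero, add_zero, pderiv_mul, pderiv_pow, map_sub,
    pderiv_X_self, pderiv_X_of_ne (by decide : (0:Fin 2) ≠ 1),
    pderiv_X_of_ne (by decide : (1:Fin 2) ≠ 0)]
  simp only [map_natCast, map_ofNat, map_one, map_add, pderiv_C, C_1, pderiv_natCast, pderiv_one]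
  push_cast
  ring

lemma div_powsucc (d : ℕ) :
    cuspDivMap K (C 3 * X 0 ^ (d + 1), -(((d : K) + 1) • (X 0 ^ d * X 1))) =
      -((2 * (d : K) + 11) • X 0 ^ (d + 3)) := by
  rw [cuspDivMap_apply, smul_eq_Cmul, smul_eq_Cmul]
  simp only [pderiv_mul, pderiv_pow, map_sub, map_neg, mul_neg, C_add, C_mul,
    pderiv_X_self, pderiv_X_of_ne (by decide : (0:Fin 2) ≠ 1),
    pderiv_X_of_ne (by decide : (1:Fin 2) ≠ 0), pderiv_C]
  simp only [map_natCast, map_ofNat, map_one, map_add, pderiv_C, C_1, pderiv_natCast, pderiv_one]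
  push_cast
  ring


lemma mem_of_smul_mem {M : Type*} [AddCommGroup M] [Module K M] {c : K} (hc : c ≠ 0)
    {x : M} {S : Submodule K M} (h : c • x ∈ S) : x ∈ S := by
  have := S.smul_mem c⁻¹ h
  rwa [smul_smul, inv_mul_cancel₀ hc, one_smul] at this

variable [CharZero K]

lemma pow_mem (a : ℕ) :
    (X 0 ^ (a + 2) : MvPolynomial (Fin 2) K) ∈ LinearMap.range (cuspDivMap K) := by
  match a with
  | 0 =>
    apply mem_of_smul_mem (c := -(3:K)) (by norm_num)
    rw [neg_smul, ← div_pow0]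
    exact LinearMap.mem_range_self _ _
  | (d+1) =>
    apply mem_of_smul_mem (c := -(2 * (d:K) + 11))
      (by rw [neg_ne_zero]
          have h : ((2 * d + 11 : ℕ) : K) ≠ 0 := Nat.cast_ne_zero.mpr (by omega)
          push_cast at h; exact h)
    rw [neg_smul, show d + 1 + 2 = d + 3 from rfl, ← div_powsucc]
    exact LinearMap.mem_range_self _ _

lemma mono_mem :
    ∀ b a : ℕ, (X 0 ^ a * X 1 ^ b : MvPolynomial (Fin 2) K) ∈
      LinearMap.range (cuspDivMap K) ⊔ Submodule.span K {1, X 0} := by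
  intro b
  induction b using Nat.strong_induction_on with
  | _ b ih =>
    match b with
    | 0 =>
      intro a
      rw [pow_zero, mul_one]
      match a with
      | 0 => exact Submodule.mem_sup_right (Submodule.subset_span (by simp))
      | 1 => exact Submodule.mem_sup_right (Submodule.subset_span (by simp))
      | (c+2) => exact Submodule.mem_sup_left (pow_mem c)
    | 1 =>
      intro a
      apply Submodule.mem_sup_left
      apply mem_of_smul_mem (c := (2:K)) (by norm_num)
      rw [pow_one, ← div_b1]
      exact LinearMap.mem_range_self _ _
    | (c+2) =>
      intro a
      apply mem_of_smul_mem (c := (c:K) + 3)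
        (by have h : ((c + 3 : ℕ) : K) ≠ 0 := Nat.cast_ne_zero.mpr (by omega)
            push_cast at h; exact h)
      have h := div_bsucc (K := K) a c
      have : ((c : K) + 3) • (X 0 ^ a * X 1 ^ (c + 2) : MvPolynomial (Fin 2) K) =
          cuspDivMap K (0, X 0 ^ a * X 1 ^ (c + 1)) +
          ((c : K) + 1) • (X 0 ^ (a + 3) * X 1 ^ c) := by
        rw [h]; ring
      rw [this]
      exact Submodule.add_mem _
        (Submodule.mem_sup_left (LinearMap.mem_range_self _ _))
        (Submodule.smul_mem _ _ (ih c (by omega) (a + 3)))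

lemma fin2_decomp (v : Fin 2 →₀ ℕ) :
    v = Finsupp.single 0 (v 0) + Finsupp.single 1 (v 1) := by
  ext j
  fin_cases j <;> simp

lemma sup_eq_top :
    LinearMap.range (cuspDivMap K) ⊔
      Submodule.span K {(1 : MvPolynomial (Fin 2) K), X 0} = ⊤ := by
  rw [eq_top_iff]
  intro F _
  rw [F.as_sum]
  apply Submodule.sum_mem
  intro v hv
  have hm : (monomial v (coeff v F) : MvPolynomial (Fin 2) K) =
      coeff v F • (X 0 ^ (v 0) * X 1 ^ (v 1)) := by
    rw [X_pow_eq_monomial, X_pow_eq_monomial, monomial_mul, smul_monomial,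
      ← fin2_decomp]
    simp
  rw [hm]
  exact Submodule.smul_mem _ _ (mono_mem _ _)


omit [CharZero K] in
lemma span_coeffs_zero {s t : K}
    (h : s • (1 : MvPolynomial (Fin 2) K) + t • X 0 ∈ LinearMap.range (cuspDivMap K)) :
    s = 0 ∧ t = 0 := by
  obtain ⟨h0, h1⟩ := coeffs_of_mem h
  rw [coeff_add, coeff_smul, coeff_smul, coeff_one, coeff_X'] at h0 h1
  rw [if_pos rfl, if_neg (by simp [Finsupp.single_eq_zero]), smul_zero, add_zero,
    smul_eq_mul, mul_one] at h0
  rw [if_neg (by simp [Finsupp.single_eq_zero, eq_comm]), if_pos rfl, smul_zero, zero_add,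
    smul_eq_mul, mul_one] at h1
  exact ⟨h0, h1⟩

omit [CharZero K] in
lemma disj :
    Disjoint (LinearMap.range (cuspDivMap K))
      (Submodule.span K {(1 : MvPolynomial (Fin 2) K), X 0}) := by
  rw [Submodule.disjoint_def]
  intro F hF hFs
  obtain ⟨s, t, rfl⟩ := Submodule.mem_span_pair.mp hFs
  obtain ⟨hs, ht⟩ := span_coeffs_zero hF
  simp [hs, ht]

end CuspAux

open MvPolynomial in
/-- Section 7, the planar cusp: the subspace `D` of `K[y₁,y₂]` of divergences
`∂/∂y₁((y₂² - y₁³)g₁) + ∂/∂y₂((y₂² - y₁³)g₂)` satisfies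
`K[y₁,y₂] = D ⊕ span {1, y₁}`; in particular `K[y₁,y₂]/D` is `2`-dimensional with basis the
classes of `1` and `y₁`. -/
theorem cusp_divergence_complement
    (K : Type*) [Field K] [CharZero K] :
    (∀ F : MvPolynomial (Fin 2) K,
        F ∈ LinearMap.range (cuspDivMap K) ↔
          ∃ g₁ g₂ : MvPolynomial (Fin 2) K,
            F = pderiv (0 : Fin 2) (((X 1) ^ 2 - (X 0) ^ 3) * g₁) +
                pderiv (1 : Fin 2) (((X 1) ^ 2 - (X 0) ^ 3) * g₂)) ∧
    IsCompl (LinearMap.range (cuspDivMap K))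
      (Submodule.span K {(1 : MvPolynomial (Fin 2) K), X 0}) ∧
    Module.finrank K (MvPolynomial (Fin 2) K ⧸ LinearMap.range (cuspDivMap K)) = 2 ∧
    LinearIndependent K
      ![(Submodule.Quotient.mk 1 :
          MvPolynomial (Fin 2) K ⧸ LinearMap.range (cuspDivMap K)),
        Submodule.Quotient.mk (X 0)] ∧
    Submodule.span K
      {(Submodule.Quotient.mk 1 :
          MvPolynomial (Fin 2) K ⧸ LinearMap.range (cuspDivMap K)),
        Submodule.Quotient.mk (X 0)} = ⊤ := by
  set D := LinearMap.range (cuspDivMap K) with hD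
  have hsup := CuspAux.sup_eq_top (K := K)
  have hdisj := CuspAux.disj (K := K)
  have hcompl : IsCompl D (Submodule.span K {(1 : MvPolynomial (Fin 2) K), X 0}) :=
    ⟨hdisj, codisjoint_iff.mpr hsup⟩
  have hli : LinearIndependent K
      ![(Submodule.Quotient.mk 1 : MvPolynomial (Fin 2) K ⧸ D),
        Submodule.Quotient.mk (X 0)] := by
    rw [LinearIndependent.pair_iff]
    intro s t hst
    have hmem : s • (1 : MvPolynomial (Fin 2) K) + t • X 0 ∈ D := by
      rw [← Submodule.Quotient.mk_eq_zero]
      rw [Submodule.Quotient.mk_add, Submodule.Quotient.mk_smul, Submodule.Quotient.mk_smul]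
      exact hst
    exact CuspAux.span_coeffs_zero hmem
  have hspan : Submodule.span K
      {(Submodule.Quotient.mk 1 : MvPolynomial (Fin 2) K ⧸ D),
        Submodule.Quotient.mk (X 0)} = ⊤ := by
    have hset : ({(Submodule.Quotient.mk 1 : MvPolynomial (Fin 2) K ⧸ D),
        Submodule.Quotient.mk (X 0)} : Set _) = D.mkQ '' {1, X 0} := by
      rw [Set.image_pair]; rfl
    rw [hset, ← Submodule.map_span]
    have := congrArg (Submodule.map D.mkQ) hsup
    rwa [Submodule.map_sup, Submodule.map_top, Submodule.range_mkQ,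
      Submodule.mkQ_map_self D,
      bot_sup_eq] at this
  have hrank : Module.finrank K (MvPolynomial (Fin 2) K ⧸ D) = 2 := by
    have hr : Set.range ![(Submodule.Quotient.mk 1 : MvPolynomial (Fin 2) K ⧸ D),
        Submodule.Quotient.mk (X 0)] =
        {(Submodule.Quotient.mk 1 : MvPolynomial (Fin 2) K ⧸ D),
          Submodule.Quotient.mk (X 0)} := by
      ext z
      simp [Fin.exists_fin_two, or_comm]
    let b := Module.Basis.mk hli (by rw [hr, hspan])
    rw [Module.finrank_eq_card_basis b, Fintype.card_fin]
  refine ⟨?_, hcompl, hrank, hli, hspan⟩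
  intro F
  constructor
  · rintro ⟨⟨g₁, g₂⟩, rfl⟩
    exact ⟨g₁, g₂, (CuspAux.cuspDivMap_apply g₁ g₂)⟩
  · rintro ⟨g₁, g₂, rfl⟩
    exact ⟨(g₁, g₂), (CuspAux.cuspDivMap_apply g₁ g₂).symm⟩
end

section
/- Let K be a field of characteristic zero. In the polynomial ring K[x,y], let D be the K-span of all polynomials ∂a₁/∂x + ∂a₂/∂y, where a₁, a₂ ∈ K[x,y], a₁ has zero constant term, a₁ is even in y (a₁(x,−y) = a₁(x,y)) and a₂ is odd in y (a₂(x,−y) = −a₂(x,y)). Then the images of the monomials x^l·y^{2k+1} (for all integers l, k ≥ 0) in the quotient space K[x,y]/D are linearly independent over K; in particular K[x,y]/D is infinite-dimensional. -/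
open MvPolynomial in
/-- Chain rule for the substitution `(x,y) ↦ (x,-y)` and `∂/∂x`, `∂/∂y`. -/
private lemma fold_aux_pderiv (K : Type*) [Field K] (σ : Fin 2 → MvPolynomial (Fin 2) K)
    (hσ : σ = ![X 0, -X 1]) (p : MvPolynomial (Fin 2) K) :
    aeval σ (pderiv (0 : Fin 2) p) = pderiv (0 : Fin 2) (aeval σ p) ∧
    aeval σ (pderiv (1 : Fin 2) p) = - pderiv (1 : Fin 2) (aeval σ p) := by
  subst hσ
  induction p using MvPolynomial.induction_on with
  | C a => simp
  | add p q hp hq =>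
    constructor
    · simp only [map_add, hp.1, hq.1]
    · simp only [map_add, hp.2, hq.2]; ring
  | mul_X p i hp =>
    constructor
    · rw [pderiv_mul, map_add, map_mul, map_mul, hp.1, map_mul, pderiv_mul]
      congr 1
      fin_cases i <;> simp
    · rw [pderiv_mul, map_add, map_mul, map_mul, hp.2, map_mul, pderiv_mul, neg_add]
      congr 1
      · ring
      · fin_cases i <;> simp

open MvPolynomial in
/-- Section 7, the fold map: let `D ⊆ K[x,y]` be the span of all divergences
`∂a₁/∂x + ∂a₂/∂y` of lowerable vector fields for the fold, i.e. with `a₁` even in `y` with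
zero constant term and `a₂` odd in `y`. Then the classes of the monomials `x^l·y^(2k+1)` in
`K[x,y]/D` are linearly independent; in particular `K[x,y]/D` is infinite-dimensional. -/
theorem fold_divergence_infinite_codim
    (K : Type*) [Field K] [CharZero K]
    (D : Submodule K (MvPolynomial (Fin 2) K))
    (hD : D = Submodule.span K
      {F : MvPolynomial (Fin 2) K |
        ∃ a₁ a₂ : MvPolynomial (Fin 2) K,
          constantCoeff a₁ = 0 ∧
          aeval ![X 0, -X 1] a₁ = a₁ ∧
          aeval ![X 0, -X 1] a₂ = -a₂ ∧
          F = pderiv (0 : Fin 2) a₁ + pderiv (1 : Fin 2) a₂}) :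
    LinearIndependent K
      (fun lk : ℕ × ℕ =>
        (Submodule.Quotient.mk ((X 0) ^ lk.1 * (X 1) ^ (2 * lk.2 + 1)) :
          MvPolynomial (Fin 2) K ⧸ D)) ∧
    ¬ Module.Finite K (MvPolynomial (Fin 2) K ⧸ D) := by
  -- the "2 × odd part" map N p = p - p(x,-y)
  set σ : Fin 2 → MvPolynomial (Fin 2) K := ![X 0, -X 1] with hσ
  let N : MvPolynomial (Fin 2) K →ₗ[K] MvPolynomial (Fin 2) K :=
    LinearMap.id - (aeval σ).toLinearMap
  -- every generator of D is fixed by aeval σ, hence killed by N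
  have hker : D ≤ LinearMap.ker N := by
    rw [hD, Submodule.span_le]
    rintro F ⟨a₁, a₂, -, h₁, h₂, rfl⟩
    simp only [SetLike.mem_coe, LinearMap.mem_ker, N, LinearMap.sub_apply, LinearMap.id_apply,
      AlgHom.toLinearMap_apply, sub_eq_zero]
    rw [map_add, (fold_aux_pderiv K σ hσ a₁).1, (fold_aux_pderiv K σ hσ a₂).2, h₁, h₂,
      map_neg, neg_neg]
  -- the induced map on the quotient, divided by 2
  let L : (MvPolynomial (Fin 2) K ⧸ D) →ₗ[K] MvPolynomial (Fin 2) K :=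
    (2 : K)⁻¹ • D.liftQ N hker
  -- L sends the class of x^l y^(2k+1) to that monomial itself
  have hL : ∀ lk : ℕ × ℕ,
      L (Submodule.Quotient.mk ((X 0) ^ lk.1 * (X 1) ^ (2 * lk.2 + 1)))
        = (X 0) ^ lk.1 * (X 1) ^ (2 * lk.2 + 1) := by
    intro lk
    have : N ((X 0) ^ lk.1 * (X 1) ^ (2 * lk.2 + 1))
        = (2 : K) • ((X 0) ^ lk.1 * (X 1) ^ (2 * lk.2 + 1)) := by
      simp only [N, LinearMap.sub_apply, LinearMap.id_apply, AlgHom.toLinearMap_apply,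
        map_mul, map_pow, aeval_X]
      have h0 : σ 0 = X 0 := rfl
      have h1 : σ 1 = -X 1 := rfl
      rw [h0, h1, Odd.neg_pow ⟨lk.2, by ring⟩]
      rw [two_smul]; ring
    simp only [L, LinearMap.smul_apply, Submodule.liftQ_apply, this, smul_smul,
      inv_mul_cancel₀ (two_ne_zero (α := K)), one_smul]
  -- monomials x^l y^(2k+1) are linearly independent in K[x,y]
  have hmono : LinearIndependent K
      (fun lk : ℕ × ℕ => (X 0 : MvPolynomial (Fin 2) K) ^ lk.1 * (X 1) ^ (2 * lk.2 + 1)) := by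
    have hb := (MvPolynomial.basisMonomials (Fin 2) K).linearIndependent
    have hinj : Function.Injective
        (fun lk : ℕ × ℕ => Finsupp.single (0 : Fin 2) lk.1 + Finsupp.single 1 (2 * lk.2 + 1)) := by
      intro a b hab
      have h0 := congrArg (fun f => f 0) hab
      have h1 := congrArg (fun f => f 1) hab
      simp [Finsupp.single_apply] at h0 h1
      exact Prod.ext h0 (by omega)
    have := hb.comp _ hinj
    convert this using 1
    funext lk
    simp [MvPolynomial.coe_basisMonomials, X_pow_eq_monomial, monomial_mul]
    all_goals rfl
  have hli : LinearIndependent K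
      (fun lk : ℕ × ℕ =>
        (Submodule.Quotient.mk ((X 0) ^ lk.1 * (X 1) ^ (2 * lk.2 + 1)) :
          MvPolynomial (Fin 2) K ⧸ D)) := by
    apply LinearIndependent.of_comp L
    convert hmono using 1
    funext lk
    exact hL lk
  refine ⟨hli, fun hfin => ?_⟩
  haveI : Finite (ℕ × ℕ) := hli.finite
  exact not_finite (ℕ × ℕ)
end
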